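/- Let n ≥ 2 and let α > 0 satisfy α·(n − 1) < n. Then the function Q : ℝⁿ \ {0} → ℝ defined by Q(x) = ((1 + |x|^α)/(α·|x|^α))^{n−1} is locally integrable with respect to Lebesgue measure near 0, but Q does not have finite mean oscillation at the point 0; that is, limsup_{ε → 0} (1/m(B(0, ε))) ∫_{B(0, ε)} |Q(x) − \bar{Q}_ε| dm(x) = ∞, where m is Lebesgue measure on ℝⁿ, B(0, ε) = {x ∈ ℝⁿ : |x| < ε}, and \bar{Q}_ε = (1/m(B(0, ε))) ∫_{B(0, ε)} Q(x) dm(x). -/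

import Mathlib

open MeasureTheory Filter Metric Real
open scoped ENNReal Topology

private lemma fmo_aux_integrable (n : ℕ) (hn : 2 ≤ n) (α : ℝ) (hα : 0 < α)
    (hαn : α * ((n : ℝ) - 1) < n) :
    IntegrableOn (fun x : EuclideanSpace ℝ (Fin n) =>
      ((1 + ‖x‖ ^ α) / (α * ‖x‖ ^ α)) ^ (n - 1)) (Metric.ball 0 1) volume := by
  set E := EuclideanSpace ℝ (Fin n)
  set f : E → ℝ := fun x => ((1 + ‖x‖ ^ α) / (α * ‖x‖ ^ α)) ^ (n - 1) with hf
  have hnontriv : Nontrivial E := by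
    refine ⟨⟨EuclideanSpace.single ⟨0, by omega⟩ 1, 0, fun h => ?_⟩⟩
    have : (EuclideanSpace.single (⟨0, by omega⟩ : Fin n) (1:ℝ) : EuclideanSpace ℝ (Fin n)) ⟨0, by omega⟩ = (0 : EuclideanSpace ℝ (Fin n)) ⟨0, by omega⟩ := by rw [h]
    rw [EuclideanSpace.single_apply] at this
    simp only [if_pos rfl] at this
    exact one_ne_zero this
  have h0 : volume ({0} : Set E) = 0 := measure_singleton 0
  constructor
  · exact ((by fun_prop : Measurable f).aestronglyMeasurable).restrict
  · -- HasFiniteIntegral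
    set s : ℕ → ℝ := fun k => (2⁻¹ : ℝ) ^ k with hs
    have hs_pos : ∀ k, 0 < s k := fun k => pow_pos (by norm_num) k
    have hs_le_one : ∀ k, s k ≤ 1 := fun k => pow_le_one₀ (by norm_num) (by norm_num)
    set A : ℕ → Set E := fun k => (fun x : E => ‖x‖) ⁻¹' Set.Ico (s (k+1)) (s k) with hA
    have hAmeas : ∀ k, MeasurableSet (A k) := fun k =>
      measurable_norm measurableSet_Ico
    set c : ℕ → ℝ := fun k => (2 / (α * (s (k+1)) ^ α)) ^ (n - 1) with hc
    set v₁ : ℝ≥0∞ := volume (ball (0 : E) 1) with hv₁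
    set u : ℕ → ℝ := fun k => c k * (s k) ^ n with hu
    have hu_nonneg : ∀ k, 0 ≤ u k := by
      intro k
      have := (hs_pos (k+1))
      positivity
    set q : ℝ := ((2:ℝ) ^ α) ^ (n-1) * (2⁻¹:ℝ) ^ n with hq
    have hq_nonneg : 0 ≤ q := by positivity
    have hq_lt : q < 1 := by
      have h1 : ((2:ℝ) ^ α) ^ (n-1) = (2:ℝ) ^ (α * ((n:ℝ)-1)) := by
        rw [← Real.rpow_natCast ((2:ℝ) ^ α) (n-1), ← Real.rpow_mul (by norm_num)]
        congr 1
        rw [Nat.cast_sub (by omega)]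
        norm_num
      have h2 : ((2:ℝ)) ^ (n:ℕ) = (2:ℝ) ^ ((n:ℝ)) := by
        rw [Real.rpow_natCast]
      have h3 : (2:ℝ) ^ (α * ((n:ℝ)-1)) < (2:ℝ) ^ ((n:ℝ)) :=
        Real.rpow_lt_rpow_left_iff (by norm_num) |>.2 hαn
      have h4 : (2⁻¹:ℝ) ^ n = ((2:ℝ) ^ n)⁻¹ := by rw [inv_pow]
      rw [hq, h4, h1]
      rw [mul_inv_lt_iff₀ (by positivity), one_mul, h2]
      exact h3
    have hrec : ∀ k, u (k+1) = q * u k := by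
      intro k
      have ht : (0:ℝ) < (s (k+1)) ^ α := Real.rpow_pos_of_pos (hs_pos _) _
      have h2a : (0:ℝ) < (2:ℝ) ^ α := Real.rpow_pos_of_pos (by norm_num) _
      have hb : (0:ℝ) < (s k) ^ α := Real.rpow_pos_of_pos (hs_pos _) _
      have e1 : s (k+1) = 2⁻¹ * s k := by simp only [hs, pow_succ]; ring
      have e2 : s (k+1+1) = 2⁻¹ * s (k+1) := by simp only [hs, pow_succ]; ring
      have r2 : (s (k+1+1)) ^ α = ((2:ℝ)^α)⁻¹ * (s (k+1)) ^ α := by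
        rw [e2, Real.mul_rpow (by norm_num) (hs_pos _).le, Real.inv_rpow (by norm_num)]
      have r1 : (s (k+1)) ^ α = ((2:ℝ)^α)⁻¹ * (s k) ^ α := by
        rw [e1, Real.mul_rpow (by norm_num) (hs_pos _).le, Real.inv_rpow (by norm_num)]
      have hane : α ≠ 0 := hα.ne'
      have hbne : (s k) ^ α ≠ 0 := hb.ne'
      have h2ane : ((2:ℝ)^α) ≠ 0 := h2a.ne'
      simp only [hu, hc, hq]
      rw [r2, r1, e1, mul_pow]
      field_simp
      ring
    have hclosed : ∀ k, u k = u 0 * q ^ k := by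
      intro k
      induction k with
      | zero => simp
      | succ k ih => rw [hrec k, ih, pow_succ]; ring
    -- pointwise bound on A k
    have hbound : ∀ k, ∀ x ∈ A k, (‖f x‖₊ : ℝ≥0∞) ≤ ENNReal.ofReal (c k) := by
      intro k x hx
      obtain ⟨hx1, hx2⟩ := hx
      have hxpos : 0 < ‖x‖ := lt_of_lt_of_le (hs_pos (k+1)) hx1
      have htpos : 0 < ‖x‖ ^ α := Real.rpow_pos_of_pos hxpos _
      have hfx_nonneg : 0 ≤ f x := by
        have : 0 ≤ (1 + ‖x‖ ^ α) / (α * ‖x‖ ^ α) := by positivity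
        exact pow_nonneg this _
      have hfx_le : f x ≤ c k := by
        refine pow_le_pow_left₀ (by positivity) ?_ _
        have hnum : 1 + ‖x‖ ^ α ≤ 2 := by
          have : ‖x‖ ^ α ≤ 1 :=
            Real.rpow_le_one (norm_nonneg x) (le_of_lt (lt_of_lt_of_le hx2 (hs_le_one k))) hα.le
          linarith
        have hden : α * (s (k+1)) ^ α ≤ α * ‖x‖ ^ α := by
          have := Real.rpow_le_rpow (hs_pos (k+1)).le hx1 hα.le
          nlinarith
        exact div_le_div₀ (by norm_num) hnum (by positivity) hden
      rw [← enorm_eq_nnnorm, Real.enorm_eq_ofReal hfx_nonneg]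
      exact ENNReal.ofReal_le_ofReal hfx_le
    have hcover : ball (0:E) 1 \ {0} ⊆ ⋃ k, A k := by
      intro x hx
      obtain ⟨hx1, hx0⟩ := hx
      have hxpos : 0 < ‖x‖ := by
        exact norm_pos_iff.2 (by simpa using hx0)
      have hxlt1 : ‖x‖ < 1 := by simpa [mem_ball, dist_zero_right] using hx1
      have hex : ∃ k, s (k+1) ≤ ‖x‖ := by
        obtain ⟨m, hm⟩ := exists_pow_lt_of_lt_one hxpos (by norm_num : (2⁻¹:ℝ) < 1)
        exact ⟨m, le_of_lt (by simpa [hs] using lt_of_le_of_lt (pow_le_pow_of_le_one (by norm_num) (by norm_num) (Nat.le_succ m)) hm)⟩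
      set k := Nat.find hex with hk
      refine Set.mem_iUnion.2 ⟨k, Nat.find_spec hex, ?_⟩
      rcases Nat.eq_zero_or_pos k with h | h
      · rw [h]; simpa [hs] using hxlt1
      · have := Nat.find_min hex (m := k - 1) (by omega)
        push_neg at this
        have hk1 : k - 1 + 1 = k := by omega
        rw [hk1] at this
        exact this
    calc ∫⁻ x in ball (0:E) 1, ‖f x‖₊ ∂volume
        = ∫⁻ x in ball (0:E) 1 \ {0}, ‖f x‖₊ ∂volume := by
          refine (setLIntegral_congr ?_).symm
          exact (diff_ae_eq_self).2 (measure_mono_null Set.inter_subset_right h0)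
      _ ≤ ∫⁻ x in ⋃ k, A k, ‖f x‖₊ ∂volume := lintegral_mono_set hcover
      _ ≤ ∑' k, ∫⁻ x in A k, ‖f x‖₊ ∂volume := lintegral_iUnion_le _ _
      _ ≤ ∑' k, ENNReal.ofReal (u k) * v₁ := by
          refine ENNReal.tsum_le_tsum fun k => ?_
          calc ∫⁻ x in A k, ‖f x‖₊ ∂volume
              ≤ ∫⁻ _ in A k, ENNReal.ofReal (c k) ∂volume :=
                setLIntegral_mono' (hAmeas k) (hbound k)
            _ = ENNReal.ofReal (c k) * volume (A k) := setLIntegral_const _ _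
            _ ≤ ENNReal.ofReal (c k) * (ENNReal.ofReal ((s k) ^ n) * v₁) := by
                gcongr
                have hsub : A k ⊆ ball (0:E) (s k) := by
                  intro x hx
                  simpa [mem_ball, dist_zero_right] using hx.2
                calc volume (A k) ≤ volume (ball (0:E) (s k)) := measure_mono hsub
                  _ = ENNReal.ofReal ((s k) ^ n) * v₁ := by
                      rw [Measure.addHaar_ball_of_pos _ _ (hs_pos k), finrank_euclideanSpace_fin]
            _ = ENNReal.ofReal (u k) * v₁ := by
                rw [← mul_assoc, ← ENNReal.ofReal_mul (by positivity)]
      _ = ENNReal.ofReal (u 0) * (∑' k, (ENNReal.ofReal q) ^ k) * v₁ := by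
          rw [ENNReal.tsum_mul_right, ← ENNReal.tsum_mul_left]
          congr 1
          refine tsum_congr fun k => ?_
          rw [hclosed k, ENNReal.ofReal_mul (hu_nonneg 0), ENNReal.ofReal_pow hq_nonneg]
      _ < ⊤ := by
          have hgeo : (∑' k, (ENNReal.ofReal q) ^ k) < ⊤ := by
            rw [ENNReal.tsum_geometric]
            simp only [lt_top_iff_ne_top, ENNReal.inv_ne_top]
            simp [tsub_eq_zero_iff_le, (ENNReal.ofReal_lt_one.2 hq_lt).not_ge]
          exact ENNReal.mul_lt_top (ENNReal.mul_lt_top ENNReal.ofReal_lt_top hgeo)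
            measure_ball_lt_top

set_option maxHeartbeats 1000000 in
/-- Let `n ≥ 2` and `α > 0` with `α·(n-1) < n`, and let
`Q(x) = ((1 + |x|^α)/(α·|x|^α))^{n-1}` for `x ≠ 0`. Then `Q` is locally
integrable near `0` (integrable on some ball around `0`), but `Q` does not
have finite mean oscillation at `0`: the limsup, as `ε → 0⁺`, of the mean
oscillation of `Q` over the balls `B(0, ε)` is infinite. -/
theorem Q_integrable_not_FMO (n : ℕ) (hn : 2 ≤ n) (α : ℝ) (hα : 0 < α)
    (hαn : α * ((n : ℝ) - 1) < n)
    (Q : EuclideanSpace ℝ (Fin n) → ℝ)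
    (hQ : ∀ x : EuclideanSpace ℝ (Fin n), x ≠ 0 →
      Q x = ((1 + ‖x‖ ^ α) / (α * ‖x‖ ^ α)) ^ (n - 1)) :
    (∃ ε : ℝ, 0 < ε ∧
      IntegrableOn Q (Metric.ball (0 : EuclideanSpace ℝ (Fin n)) ε) volume) ∧
    Filter.limsup (fun ε : ℝ =>
      ENNReal.ofReal
        ((volume (Metric.ball (0 : EuclideanSpace ℝ (Fin n)) ε)).toReal⁻¹ *
          ∫ x in Metric.ball (0 : EuclideanSpace ℝ (Fin n)) ε,
            |Q x - (volume (Metric.ball (0 : EuclideanSpace ℝ (Fin n)) ε)).toReal⁻¹ *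
              ∫ y in Metric.ball (0 : EuclideanSpace ℝ (Fin n)) ε, Q y|))
      (nhdsWithin (0 : ℝ) (Set.Ioi 0)) = ⊤ := by
  have hfint : IntegrableOn (fun x : EuclideanSpace ℝ (Fin n) =>
      ((1 + ‖x‖ ^ α) / (α * ‖x‖ ^ α)) ^ (n - 1)) (Metric.ball 0 1) volume :=
    fmo_aux_integrable n hn α hα hαn
  have hn1 : n - 1 ≠ 0 := by omega
  have hnontriv : Nontrivial (EuclideanSpace ℝ (Fin n)) := by
    refine ⟨⟨EuclideanSpace.single ⟨0, by omega⟩ 1, 0, fun h => ?_⟩⟩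
    have : (EuclideanSpace.single (⟨0, by omega⟩ : Fin n) (1:ℝ) : EuclideanSpace ℝ (Fin n)) ⟨0, by omega⟩ = (0 : EuclideanSpace ℝ (Fin n)) ⟨0, by omega⟩ := by rw [h]
    rw [EuclideanSpace.single_apply] at this
    simp only [if_pos rfl] at this
    exact one_ne_zero this
  have h0 : volume ({0} : Set (EuclideanSpace ℝ (Fin n))) = 0 := measure_singleton 0
  set f : EuclideanSpace ℝ (Fin n) → ℝ :=
    fun x => ((1 + ‖x‖ ^ α) / (α * ‖x‖ ^ α)) ^ (n - 1) with hfdef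
  have hae : f =ᵐ[volume] Q :=
    eventually_of_mem (compl_mem_ae_iff.2 h0) (fun x hx => (hQ x hx).symm)
  have hne0 : ∀ᵐ x ∂(volume : Measure (EuclideanSpace ℝ (Fin n))), x ≠ 0 :=
    compl_mem_ae_iff.2 h0
  have hQball : ∀ ε : ℝ, ε ≤ 1 →
      IntegrableOn Q (ball (0 : EuclideanSpace ℝ (Fin n)) ε) volume := fun ε hε =>
    (hfint.mono_set (ball_subset_ball hε)).congr (ae_restrict_of_ae hae)
  refine ⟨⟨1, one_pos, hQball 1 le_rfl⟩, ?_⟩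
  -- constants
  set θ : ℝ := ((6:ℝ) ^ (α⁻¹))⁻¹ / 2 with hθdef
  have h6pos : (0:ℝ) < (6:ℝ) ^ (α⁻¹) := Real.rpow_pos_of_pos (by norm_num) _
  have hθpos : 0 < θ := by positivity
  have h6one : (1:ℝ) ≤ (6:ℝ) ^ (α⁻¹) := by
    calc (1:ℝ) = (6:ℝ) ^ (0:ℝ) := (Real.rpow_zero 6).symm
    _ ≤ _ := Real.rpow_le_rpow_of_exponent_le (by norm_num) (by positivity)
  have hθhalf : θ ≤ 2⁻¹ := by
    rw [hθdef]
    have h1 : ((6:ℝ) ^ (α⁻¹))⁻¹ ≤ 1 := inv_le_one_of_one_le₀ h6one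
    linarith
  have hkey : ∀ ε : ℝ, 0 < ε → (ε/2) ^ α = 6 * ((θ*ε) ^ α) := by
    intro ε hε
    have h1 : ε/2 = (6:ℝ)^(α⁻¹) * (θ * ε) := by
      rw [hθdef]
      field_simp
    rw [h1, Real.mul_rpow h6pos.le (by positivity),
      ← Real.rpow_mul (by norm_num : (0:ℝ) ≤ 6), inv_mul_cancel₀ hα.ne', Real.rpow_one]
  set v₁ : ℝ≥0∞ := volume (ball (0 : EuclideanSpace ℝ (Fin n)) 1) with hv₁
  set v : ℝ := v₁.toReal with hv
  have hv_pos : 0 < v :=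
    ENNReal.toReal_pos (measure_ball_pos _ _ one_pos).ne' measure_ball_lt_top.ne
  set G : ℝ → ℝ≥0∞ :=
    fun ε => ENNReal.ofReal ((θ^n/3) * ((α * (θ*ε) ^ α)⁻¹) ^ (n-1)) with hGdef
  have hGF : ∀ᶠ ε in 𝓝[>](0:ℝ), G ε ≤
      ENNReal.ofReal
        ((volume (Metric.ball (0 : EuclideanSpace ℝ (Fin n)) ε)).toReal⁻¹ *
          ∫ x in Metric.ball (0 : EuclideanSpace ℝ (Fin n)) ε,
            |Q x - (volume (Metric.ball (0 : EuclideanSpace ℝ (Fin n)) ε)).toReal⁻¹ *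
              ∫ y in Metric.ball (0 : EuclideanSpace ℝ (Fin n)) ε, Q y|) := by
    filter_upwards [Ioc_mem_nhdsGT_of_mem (Set.mem_Ico.2 ⟨le_refl (0:ℝ), one_pos⟩)]
      with ε hεm
    obtain ⟨hε0, hε1⟩ := hεm
    set B : Set (EuclideanSpace ℝ (Fin n)) := ball 0 ε with hB
    set m : ℝ := (volume B).toReal with hm
    set Qbar : ℝ := m⁻¹ * ∫ y in B, Q y with hQbar
    set S : Set (EuclideanSpace ℝ (Fin n)) := ball 0 (θ*ε) with hS
    set bL : ℝ := (α * (θ*ε) ^ α)⁻¹ with hbL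
    set bU : ℝ := 2 / (α * (ε/2) ^ α) with hbU
    set L : ℝ := bL ^ (n-1) with hL
    set U : ℝ := bU ^ (n-1) with hU
    have hθεα : (0:ℝ) < (θ*ε)^α := Real.rpow_pos_of_pos (by positivity) _
    have hε2α : (0:ℝ) < (ε/2)^α := Real.rpow_pos_of_pos (by positivity) _
    have hbL_pos : 0 < bL := by rw [hbL]; positivity
    have hbU_pos : 0 < bU := by rw [hbU]; positivity
    have h_eq : bL = 3 * bU := by
      rw [hbL, hbU, hkey ε hε0]
      field_simp
      ring
    have hU_pos : 0 < U := pow_pos hbU_pos _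
    have hL_pos : 0 < L := pow_pos hbL_pos _
    have hLU : U ≤ L / 3 := by
      have h1 : L = 3^(n-1) * U := by rw [hL, hU, h_eq, mul_pow]
      have h3 : (3:ℝ) ≤ 3^(n-1) := by
        calc (3:ℝ) = 3^1 := (pow_one 3).symm
        _ ≤ 3^(n-1) := pow_le_pow_right₀ (by norm_num) (by omega)
      nlinarith
    have hSB : S ⊆ B := ball_subset_ball (mul_le_of_le_one_left hε0.le (by linarith))
    have habs : IntegrableOn (fun x => |Q x - Qbar|) B volume :=
      ((hQball ε hε1).sub (integrableOn_const measure_ball_lt_top.ne)).abs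
    have habs_nonneg : 0 ≤ᵐ[volume.restrict B] fun x => |Q x - Qbar| :=
      Eventually.of_forall fun x => abs_nonneg _
    -- key inequality
    have hkey2 : (volume S).toReal * (L/3) ≤ ∫ x in B, |Q x - Qbar| := by
      rcases le_total Qbar ((L+U)/2) with hc | hc
      · -- use the small ball S
        have hptwise : ∀ᵐ x ∂(volume.restrict S), L/3 ≤ |Q x - Qbar| := by
          filter_upwards [ae_restrict_mem measurableSet_ball, ae_restrict_of_ae hne0,
            ae_restrict_of_ae hae] with x hx hx0 hfx
          have hxn : ‖x‖ ≤ θ*ε := by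
            have := mem_ball_zero_iff.1 hx
            linarith
          have hxpos : 0 < ‖x‖ := norm_pos_iff.2 hx0
          have ht : (0:ℝ) < ‖x‖^α := Real.rpow_pos_of_pos hxpos _
          have h1 : ‖x‖^α ≤ (θ*ε)^α := Real.rpow_le_rpow (norm_nonneg _) hxn hα.le
          have h2 : bL ≤ (α * ‖x‖^α)⁻¹ := by
            rw [hbL]
            exact inv_anti₀ (by positivity) (mul_le_mul_of_nonneg_left h1 hα.le)
          have h3 : (α * ‖x‖^α)⁻¹ ≤ (1 + ‖x‖^α)/(α*‖x‖^α) := by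
            rw [div_eq_mul_inv]
            have hi : (0:ℝ) ≤ (α*‖x‖^α)⁻¹ := by positivity
            exact le_mul_of_one_le_left hi (by linarith)
          have hLQ : L ≤ Q x := by
            calc L ≤ ((1 + ‖x‖^α)/(α*‖x‖^α)) ^ (n-1) :=
                  pow_le_pow_left₀ hbL_pos.le (h2.trans h3) _
              _ = f x := rfl
              _ = Q x := hfx
          have : L/3 ≤ Q x - Qbar := by linarith
          exact this.trans (le_abs_self _)
        calc (volume S).toReal * (L/3)
            = ∫ _ in S, L/3 ∂volume := by rw [setIntegral_const, smul_eq_mul, measureReal_def]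
          _ ≤ ∫ x in S, |Q x - Qbar| ∂volume :=
              setIntegral_mono_ae_restrict
                (integrableOn_const measure_ball_lt_top.ne)
                (habs.mono_set hSB) hptwise
          _ ≤ ∫ x in B, |Q x - Qbar| :=
              setIntegral_mono_set habs habs_nonneg (HasSubset.Subset.eventuallyLE hSB)
      · -- use the annulus T
        set T : Set (EuclideanSpace ℝ (Fin n)) :=
          ball 0 ε \ ball (0 : EuclideanSpace ℝ (Fin n)) (ε/2) with hT
        have hTB : T ⊆ B := Set.diff_subset
        have hptwiseT : ∀ x ∈ T, L/3 ≤ |Q x - Qbar| := by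
          intro x hx
          have hx1 : ‖x‖ < ε := mem_ball_zero_iff.1 hx.1
          have hx2 : ε/2 ≤ ‖x‖ := by
            by_contra hcon
            exact hx.2 (mem_ball_zero_iff.2 (by linarith))
          have hxpos : 0 < ‖x‖ := by linarith
          have hQx : Q x = f x := hQ x (norm_pos_iff.1 hxpos)
          have ht : (0:ℝ) < ‖x‖^α := Real.rpow_pos_of_pos hxpos _
          have hnum : 1 + ‖x‖^α ≤ 2 := by
            have : ‖x‖^α ≤ 1 := Real.rpow_le_one (norm_nonneg _) (by linarith) hα.le
            linarith
          have hden : α * (ε/2)^α ≤ α * ‖x‖^α :=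
            mul_le_mul_of_nonneg_left (Real.rpow_le_rpow (by positivity) hx2 hα.le) hα.le
          have hQU : Q x ≤ U := by
            rw [hQx, hfdef, hU, hbU]
            exact pow_le_pow_left₀ (by positivity)
              (div_le_div₀ (by norm_num) hnum (by positivity) hden) _
          have : L/3 ≤ Qbar - Q x := by linarith
          calc L/3 ≤ Qbar - Q x := this
            _ ≤ |Qbar - Q x| := le_abs_self _
            _ = |Q x - Qbar| := abs_sub_comm _ _
        have hTmeas : MeasurableSet T := measurableSet_ball.diff measurableSet_ball
        have hvolT : (volume T).toReal = ε^n*v - (ε/2)^n*v := by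
          rw [hT, measure_diff (ball_subset_ball (by linarith))
            measurableSet_ball.nullMeasurableSet measure_ball_lt_top.ne,
            ENNReal.toReal_sub_of_le (measure_mono (ball_subset_ball (by linarith)))
              measure_ball_lt_top.ne,
            Measure.addHaar_ball_of_pos _ _ hε0, Measure.addHaar_ball_of_pos _ _ (by positivity : (0:ℝ) < ε/2),
            finrank_euclideanSpace_fin, ENNReal.toReal_mul, ENNReal.toReal_mul,
            ENNReal.toReal_ofReal (by positivity), ENNReal.toReal_ofReal (by positivity)]
        have hvolS : (volume S).toReal = (θ*ε)^n*v := by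
          rw [hS, Measure.addHaar_ball_of_pos _ _ (by positivity : (0:ℝ) < θ*ε),
            finrank_euclideanSpace_fin, ENNReal.toReal_mul,
            ENNReal.toReal_ofReal (by positivity)]
        have hST : (volume S).toReal ≤ (volume T).toReal := by
          rw [hvolS, hvolT]
          have hθε2 : θ*ε ≤ ε/2 := by
            calc θ*ε ≤ 2⁻¹*ε := mul_le_mul_of_nonneg_right hθhalf hε0.le
              _ = ε/2 := by ring
          have h1 : (θ*ε)^n ≤ (ε/2)^n := pow_le_pow_left₀ (by positivity) hθε2 n
          have h2 : (ε/2)^n * 2 ≤ ε^n := by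
            have h2n : (2:ℝ) ≤ 2^n := by
              calc (2:ℝ) = 2^1 := (pow_one 2).symm
              _ ≤ 2^n := pow_le_pow_right₀ (by norm_num) (by omega)
            have he : (ε/2)^n * 2 = ε^n * (2/2^n) := by rw [div_pow]; ring
            rw [he]
            exact mul_le_of_le_one_right (pow_nonneg hε0.le n)
              ((div_le_one (by positivity)).2 h2n)
          have h3 : (θ*ε)^n ≤ ε^n - (ε/2)^n := by linarith
          have h4 := mul_le_mul_of_nonneg_right h3 hv_pos.le
          rw [sub_mul] at h4
          linarith
        calc (volume S).toReal * (L/3)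
            ≤ (volume T).toReal * (L/3) :=
              mul_le_mul_of_nonneg_right hST (by positivity)
          _ = ∫ _ in T, L/3 ∂volume := by rw [setIntegral_const, smul_eq_mul, measureReal_def]
          _ ≤ ∫ x in T, |Q x - Qbar| ∂volume :=
              setIntegral_mono_on
                (integrableOn_const (lt_of_le_of_lt (measure_mono hTB)
                  measure_ball_lt_top).ne)
                (habs.mono_set hTB) hTmeas hptwiseT
          _ ≤ ∫ x in B, |Q x - Qbar| :=
              setIntegral_mono_set habs habs_nonneg (HasSubset.Subset.eventuallyLE hTB)
    -- convert to the mean oscillation bound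
    have hvolS : (volume S).toReal = (θ*ε)^n*v := by
      rw [hS, Measure.addHaar_ball_of_pos _ _ (by positivity : (0:ℝ) < θ*ε),
        finrank_euclideanSpace_fin, ENNReal.toReal_mul,
        ENNReal.toReal_ofReal (by positivity)]
    have hmval : m = ε^n * v := by
      rw [hm, hB, Measure.addHaar_ball_of_pos _ _ hε0, finrank_euclideanSpace_fin,
        ENNReal.toReal_mul, ENNReal.toReal_ofReal (by positivity)]
    have hm_pos : 0 < m := by rw [hmval]; positivity
    have hfinal : θ^n/3 * L ≤ m⁻¹ * ∫ x in B, |Q x - Qbar| := by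
      have heq : m⁻¹ * ((θ*ε)^n * v * (L/3)) = θ^n/3 * L := by
        rw [hmval, mul_pow]
        have hεn : (0:ℝ) < ε^n := pow_pos hε0 n
        field_simp
      calc θ^n/3 * L = m⁻¹ * ((θ*ε)^n * v * (L/3)) := heq.symm
        _ ≤ m⁻¹ * ∫ x in B, |Q x - Qbar| := by
            apply mul_le_mul_of_nonneg_left _ (inv_nonneg.2 hm_pos.le)
            rw [← hvolS]
            exact hkey2
    calc G ε = ENNReal.ofReal (θ^n/3 * L) := by rw [hGdef, hL, hbL]
      _ ≤ _ := ENNReal.ofReal_le_ofReal hfinal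
  -- limsup
  have t2 : Tendsto (fun t : ℝ => t ^ α) (𝓝[>](0:ℝ)) (𝓝[>](0:ℝ)) := by
    rw [tendsto_nhdsWithin_iff]
    constructor
    · have h : ContinuousAt (fun t : ℝ => t ^ α) 0 :=
        Real.continuousAt_rpow_const 0 α (Or.inr hα.le)
      have h2 := h.continuousWithinAt (s := Set.Ioi (0:ℝ))
      simpa [ContinuousWithinAt, Real.zero_rpow hα.ne'] using h2
    · filter_upwards [self_mem_nhdsWithin] with t ht
      exact Real.rpow_pos_of_pos ht _
  have t1 : Tendsto (fun ε : ℝ => θ * ε) (𝓝[>](0:ℝ)) (𝓝[>](0:ℝ)) := by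
    rw [tendsto_nhdsWithin_iff]
    constructor
    · have h := (continuous_mul_left θ).tendsto (0:ℝ)
      simp only [id_eq, mul_zero] at h
      exact h.mono_left nhdsWithin_le_nhds
    · filter_upwards [self_mem_nhdsWithin] with t ht
      exact mul_pos hθpos ht
  have t3 : Tendsto (fun t : ℝ => α * t) (𝓝[>](0:ℝ)) (𝓝[>](0:ℝ)) := by
    rw [tendsto_nhdsWithin_iff]
    constructor
    · have h := (continuous_mul_left α).tendsto (0:ℝ)
      simp only [id_eq, mul_zero] at h
      exact h.mono_left nhdsWithin_le_nhds
    · filter_upwards [self_mem_nhdsWithin] with t ht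
      exact mul_pos hα ht
  have t4 : Tendsto (fun ε : ℝ => α * (θ*ε)^α) (𝓝[>](0:ℝ)) (𝓝[>](0:ℝ)) :=
    t3.comp (t2.comp t1)
  have t5 : Tendsto (fun ε : ℝ => (α * (θ*ε)^α)⁻¹) (𝓝[>](0:ℝ)) atTop :=
    t4.inv_tendsto_nhdsGT_zero
  have t6 : Tendsto (fun ε : ℝ => ((α * (θ*ε)^α)⁻¹)^(n-1)) (𝓝[>](0:ℝ)) atTop :=
    (tendsto_pow_atTop hn1).comp t5
  have t7 : Tendsto (fun ε : ℝ => (θ^n/3) * ((α * (θ*ε)^α)⁻¹)^(n-1)) (𝓝[>](0:ℝ)) atTop :=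
    t6.const_mul_atTop (by positivity)
  have hG_tendsto : Tendsto G (𝓝[>](0:ℝ)) (𝓝 ⊤) :=
    ENNReal.tendsto_ofReal_atTop.comp t7
  have h1 : limsup G (𝓝[>](0:ℝ)) = ⊤ := hG_tendsto.limsup_eq
  exact top_le_iff.1 (le_trans (le_of_eq h1.symm) (limsup_le_limsup hGF))
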